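/- Let ξ be a ranking function for the product automaton P with upper bound α = |X_P| − |F_P| + 1. Then for every state x ∈ X_P with ξ(x) < α and every finite sequence u of uncontrollable events (u ∈ Σ_{P,u}*), if δ_P(x,u) is defined then ξ(δ_P(x,u)) < α. -/

import Mathlib

/-- A deterministic finite automaton with partial transitions:
states `X`, events `E`, partial transition function `delta` (modeled with `Option`),
uncontrollable events `Eu` (the controllable ones being the complement),
accepting states `F`, and initial state `init`. -/
structure PAut (X E : Type*) [Fintype X] [DecidableEq X] [Fintype E] [DecidableEq E] where
  delta : X → E → Option X
  Eu : Finset E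
  F : Finset X
  init : X

variable {X E : Type*} [Fintype X] [DecidableEq X] [Fintype E] [DecidableEq E]

namespace PAut

/-- `Σ_P(x)`: the events enabled (defined) at `x`. -/
def enabled (P : PAut X E) (x : X) : Finset E :=
  Finset.univ.filter fun σ => (P.delta x σ).isSome

/-- `Σ_{P,u}(x) = Σ_P(x) ∩ Σ_{P,u}`. -/
def enabledU (P : PAut X E) (x : X) : Finset E := P.enabled x ∩ P.Eu

/-- `Σ_{P,c}(x) = Σ_P(x) ∩ Σ_{P,c}`. -/
def enabledC (P : PAut X E) (x : X) : Finset E := P.enabled x \ P.Eu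

/-- `δ_P(x,σ)` as a total function; it agrees with `delta` on enabled events. -/
def dest (P : PAut X E) (x : X) (σ : E) : X := (P.delta x σ).getD x

/-- `suc_P(x) = { δ_P(x,σ) : σ ∈ Σ_P(x) }`. -/
def suc (P : PAut X E) (x : X) : Finset X := (P.enabled x).image (P.dest x)

/-- Extension of `δ_P` to finite event sequences. -/
def deltaStar (P : PAut X E) (x : X) : List E → Option X
  | [] => some x
  | σ :: s => (P.delta x σ).bind fun y => P.deltaStar y s

/-- The upper bound `α = |X_P| − |F_P| + 1`. -/
def alpha (P : PAut X E) : ℕ := Fintype.card X - P.F.card + 1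

/-- The indicator `I(x)`: `1` if `x ∉ F_P`, `0` if `x ∈ F_P`. -/
def ind (P : PAut X E) (x : X) : ℕ := if x ∈ P.F then 0 else 1

/-- `ξ` is a ranking function for `P`:
(1) `ξ x = 0 ↔ x ∈ F_P`;
(2) if no event is enabled at `x` then `ξ x = α`;
if some event is enabled but no uncontrollable one
(equivalently, the set of enabled controllable events is nonempty and the set of
enabled uncontrollable events is empty) then
`ξ x = min (min_{σ ∈ Σ_{P,c}(x)} ξ(δ_P(x,σ)) + I x) α`;
otherwise (some uncontrollable event is enabled)
`ξ x = min (max_{σ ∈ Σ_{P,u}(x)} ξ(δ_P(x,σ)) + I x) α`. -/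
def IsRanking (P : PAut X E) (ξ : X → ℕ) : Prop :=
  ∀ x : X,
    (ξ x = 0 ↔ x ∈ P.F) ∧
    (P.enabled x = ∅ → ξ x = P.alpha) ∧
    (∀ hne : (P.enabledC x).Nonempty, P.enabledU x = ∅ →
      ξ x = min (((P.enabledC x).inf' hne fun σ => ξ (P.dest x σ)) + P.ind x) P.alpha) ∧
    (∀ hne : (P.enabledU x).Nonempty,
      ξ x = min (((P.enabledU x).sup' hne fun σ => ξ (P.dest x σ)) + P.ind x) P.alpha)

/-- `η` is a permissiveness function: `η 0 ≤ α`, `η` is nonincreasing,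
and `η k̄ = 0` for some `k̄`. -/
def IsPerm (P : PAut X E) (η : ℕ → ℝ) : Prop :=
  η 0 ≤ (P.alpha : ℝ) ∧ (∀ k : ℕ, η (k + 1) ≤ η k) ∧ ∃ kb : ℕ, η kb = 0

/-- `online(x,k) = { σ ∈ Σ_P(x) : ξ(δ_P(x,σ)) < max{ξ(x), η(k)} }`. -/
noncomputable def online (P : PAut X E) (ξ : X → ℕ) (η : ℕ → ℝ) (x : X) (k : ℕ) :
    Finset E :=
  (P.enabled x).filter fun σ => (ξ (P.dest x σ) : ℝ) < max (ξ x : ℝ) (η k)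

end PAut

/-- from a state with `ξ x < α`, any defined sequence of
uncontrollable events leads to a state of rank `< α`. -/
theorem stmt_3 {X E : Type*} [Fintype X] [DecidableEq X] [Fintype E] [DecidableEq E]
    (P : PAut X E) (ξ : X → ℕ) (hξ : P.IsRanking ξ)
    (x : X) (hα : ξ x < P.alpha)
    (u : List E) (hu : ∀ σ ∈ u, σ ∈ P.Eu)
    (y : X) (hy : P.deltaStar x u = some y) :
    ξ y < P.alpha := by
  induction u generalizing x with
  | nil =>
    simp only [PAut.deltaStar, Option.some.injEq] at hy
    subst hy; exact hα
  | cons σ s ih =>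
    simp only [PAut.deltaStar, Option.bind_eq_some_iff] at hy
    obtain ⟨z, hz, hzs⟩ := hy
    have hσu : σ ∈ P.Eu := hu σ (List.mem_cons_self)
    have hen : σ ∈ P.enabledU x := by
      simp [PAut.enabledU, PAut.enabled, hσu, hz]
    have hne : (P.enabledU x).Nonempty := ⟨σ, hen⟩
    have hx := (hξ x).2.2.2 hne
    have hdest : P.dest x σ = z := by simp [PAut.dest, hz]
    have hle : ξ z ≤ (P.enabledU x).sup' hne fun τ => ξ (P.dest x τ) := by
      rw [← hdest]; exact Finset.le_sup' (fun τ => ξ (P.dest x τ)) hen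
    have hz_lt : ξ z < P.alpha := by
      rw [hx] at hα
      rcases lt_or_ge ((P.enabledU x).sup' hne (fun τ => ξ (P.dest x τ)) + P.ind x) P.alpha with h | h
      · omega
      · omega
    exact ih z hz_lt (fun τ hτ => hu τ (List.mem_cons_of_mem _ hτ)) hzs
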